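/- Let a, γ, β, λ > 0 and c∞ be real numbers, and define, for ν > γ, Q(ν) = (λ/β) · ( (e^a / ln 2) · ν · E1(a·ν/(ν − γ)) − λ·ν − (γ / ln 2) · E1(a·γ/(ν − γ)) + c∞ ). Then Q is differentiable on (γ, ∞) with derivative Q′(ν) = (λ/β) · ( (e^a / ln 2) · E1(a·ν/(ν − γ)) − λ ). -/

import Mathlib

open MeasureTheory

/-- The exponential integral `E1 z = ∫_z^∞ e^{-t}/t dt`. -/
noncomputable def expIntegralE1 (z : ℝ) : ℝ := ∫ t in Set.Ioi z, Real.exp (-t) / t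

lemma f_integrableOn {c : ℝ} (hc : 0 < c) :
    IntegrableOn (fun t => Real.exp (-t) / t) (Set.Ioi c) := by
  have hg : IntegrableOn (fun t => Real.exp (-t) / c) (Set.Ioi c) := by
    have := (exp_neg_integrableOn_Ioi c (b := 1) one_pos).div_const c
    simp at this; exact this
  refine MeasureTheory.Integrable.mono hg ?_ ?_
  · exact ((Real.measurable_exp.comp measurable_neg).div measurable_id).aestronglyMeasurable
  · filter_upwards [ae_restrict_mem measurableSet_Ioi] with t ht
    have ht' : c < t := ht
    have h1 : (0:ℝ) < t := hc.trans ht'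
    rw [Real.norm_eq_abs, Real.norm_eq_abs, abs_of_pos (by positivity), abs_of_pos (by positivity)]
    exact div_le_div_of_nonneg_left (Real.exp_pos _).le hc ht'.le

lemma E1_hasDerivAt {z : ℝ} (hz : 0 < z) :
    HasDerivAt expIntegralE1 (-(Real.exp (-z) / z)) z := by
  set c := z / 2 with hcdef
  have hc : 0 < c := by positivity
  have hcz : c < z := by simp [hcdef]; linarith
  have hint := f_integrableOn hc
  have key : ∀ x ∈ Set.Ioi c,
      expIntegralE1 x = expIntegralE1 c - ∫ t in c..x, Real.exp (-t) / t := by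
    intro x hx
    have hx' : c < x := hx
    have hsplit : (Set.Ioc c x) ∪ (Set.Ioi x) = Set.Ioi c := Set.Ioc_union_Ioi_eq_Ioi hx'.le
    have := setIntegral_union (f := fun t => Real.exp (-t) / t) (μ := volume)
      Set.Ioc_disjoint_Ioi_same measurableSet_Ioi
      (hint.mono_set Set.Ioc_subset_Ioi_self)
      (hint.mono_set (Set.Ioi_subset_Ioi hx'.le))
    rw [hsplit] at this
    rw [intervalIntegral.integral_of_le hx'.le]
    unfold expIntegralE1
    rw [this]; ring
  have hupper : HasDerivAt (fun x => expIntegralE1 c - ∫ t in c..x, Real.exp (-t) / t)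
      (-(Real.exp (-z) / z)) z := by
    have hii : IntervalIntegrable (fun t => Real.exp (-t) / t) volume c z :=
      (intervalIntegrable_iff_integrableOn_Ioc_of_le hcz.le).2
        (hint.mono_set Set.Ioc_subset_Ioi_self)
    have hcont : ContinuousAt (fun t => Real.exp (-t) / t) z :=
      ((Real.continuous_exp.comp continuous_neg).continuousAt).div continuousAt_id hz.ne'
    have hmeas : StronglyMeasurableAtFilter (fun t => Real.exp (-t) / t) (nhds z) volume :=
      ((Real.measurable_exp.comp measurable_neg).div measurable_id).stronglyMeasurable.stronglyMeasurableAtFilter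
    exact ((intervalIntegral.integral_hasDerivAt_right hii hmeas hcont).const_sub _)
  refine hupper.congr_of_eventuallyEq ?_
  filter_upwards [Ioi_mem_nhds hcz] with x hx using key x hx


/-- The parametric queue-length map
`Q(ν) = (λ/β)((e^a/ln 2) ν E1(aν/(ν-γ)) - λν - (γ/ln 2) E1(aγ/(ν-γ)) + c∞)`
is differentiable on `(γ, ∞)` with derivative
`Q′(ν) = (λ/β)((e^a/ln 2) E1(aν/(ν-γ)) - λ)`. -/
theorem parametric_queue_hasDerivAt (a γ β lam cInf : ℝ)
    (ha : 0 < a) (hγ : 0 < γ) (hβ : 0 < β) (hlam : 0 < lam)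
    (Q : ℝ → ℝ)
    (hQ : ∀ ν ∈ Set.Ioi γ,
      Q ν = lam / β * (Real.exp a / Real.log 2 * ν * expIntegralE1 (a * ν / (ν - γ))
        - lam * ν - γ / Real.log 2 * expIntegralE1 (a * γ / (ν - γ)) + cInf)) :
    ∀ ν ∈ Set.Ioi γ,
      HasDerivAt Q
        (lam / β * (Real.exp a / Real.log 2 * expIntegralE1 (a * ν / (ν - γ)) - lam)) ν := by
  intro ν hν
  have hν' : γ < ν := hν
  have hνpos : 0 < ν := hγ.trans hν'
  have hw : 0 < ν - γ := sub_pos.2 hν'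
  have hupos : 0 < a * ν / (ν - γ) := by positivity
  have hvpos : 0 < a * γ / (ν - γ) := by positivity
  -- derivative of inner maps
  have hu : HasDerivAt (fun x => a * x / (x - γ))
      ((a * (ν - γ) - a * ν * 1) / (ν - γ) ^ 2) ν := by
    have h := (((hasDerivAt_id ν).const_mul a).div ((hasDerivAt_id ν).sub_const γ) hw.ne')
    simp at h ⊢; exact h
  have hv : HasDerivAt (fun x => a * γ / (x - γ))
      ((0 * (ν - γ) - a * γ * 1) / (ν - γ) ^ 2) ν := by
    have h := ((hasDerivAt_const ν (a * γ)).div ((hasDerivAt_id ν).sub_const γ) hw.ne')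
    simp at h ⊢; exact h
  have hEu : HasDerivAt (fun x => expIntegralE1 (a * x / (x - γ)))
      (-(Real.exp (-(a * ν / (ν - γ))) / (a * ν / (ν - γ))) *
        ((a * (ν - γ) - a * ν * 1) / (ν - γ) ^ 2)) ν :=
    by have h := (E1_hasDerivAt hupos).comp ν hu; exact h
  have hEv : HasDerivAt (fun x => expIntegralE1 (a * γ / (x - γ)))
      (-(Real.exp (-(a * γ / (ν - γ))) / (a * γ / (ν - γ))) *
        ((0 * (ν - γ) - a * γ * 1) / (ν - γ) ^ 2)) ν :=
    by have h := (E1_hasDerivAt hvpos).comp ν hv; exact h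
  set K := Real.exp a / Real.log 2 with hK
  have hF : HasDerivAt (fun x => lam / β * (K * x * expIntegralE1 (a * x / (x - γ))
      - lam * x - γ / Real.log 2 * expIntegralE1 (a * γ / (x - γ)) + cInf))
      (lam / β * ((K * 1 * expIntegralE1 (a * ν / (ν - γ)) + K * ν *
        (-(Real.exp (-(a * ν / (ν - γ))) / (a * ν / (ν - γ))) *
          ((a * (ν - γ) - a * ν * 1) / (ν - γ) ^ 2)))
        - lam * 1 - γ / Real.log 2 *
          (-(Real.exp (-(a * γ / (ν - γ))) / (a * γ / (ν - γ))) *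
            ((0 * (ν - γ) - a * γ * 1) / (ν - γ) ^ 2)))) ν := by
    exact (((((hasDerivAt_id ν).const_mul K).mul hEu).sub
      ((hasDerivAt_id ν).const_mul lam)).sub (hEv.const_mul (γ / Real.log 2))
      |>.add_const cInf).const_mul (lam / β)
  have heq : Q =ᶠ[nhds ν] (fun x => lam / β * (K * x * expIntegralE1 (a * x / (x - γ))
      - lam * x - γ / Real.log 2 * expIntegralE1 (a * γ / (x - γ)) + cInf)) := by
    filter_upwards [Ioi_mem_nhds hν'] with x hx using hQ x hx
  have hFin := hF.congr_of_eventuallyEq heq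
  have hlog : Real.log 2 ≠ 0 := (Real.log_pos (by norm_num)).ne'
  have hexp : Real.exp (-(a * ν / (ν - γ))) =
      Real.exp (-a) * Real.exp (-(a * γ / (ν - γ))) := by
    rw [← Real.exp_add]; congr 1; field_simp; ring
  refine hFin.congr_deriv ?_
  rw [hexp, hK, Real.exp_neg a]
  field_simp
  ring
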